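/- ∫₀^∞ ∫_{-∞}^0 Σ_{k=-∞}^∞ |exp(-[(a+b-2k(b-a))²+(a-b)²]/2) - exp(-[(a-b-2k(b-a))²+(a-b)²]/2)| da db < ∞. -/
import Mathlib

open MeasureTheory Real
open scoped ENNReal

private lemma key_ineq1 (k : ℤ) (a b : ℝ) (ha : a < 0) (hb : 0 < b) :
    (((k:ℝ)^2+1)) * (a^2+b^2) ≤ (a + b - 2*(k:ℝ)*(b-a))^2 + (a-b)^2 := by
  have hab : 0 < (-a) * b := mul_pos (neg_pos.2 ha) hb
  rcases lt_trichotomy k 0 with hk | hk | hk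
  · have hk1 : (k:ℝ) ≤ -1 := by exact_mod_cast (show k ≤ -1 by omega)
    nlinarith [sq_nonneg ((k:ℝ)+1), sq_nonneg (a+b-2*(k:ℝ)*(b-a)), sq_nonneg (b-a),
      mul_nonneg (mul_nonneg (by linarith : (0:ℝ) ≤ -2*(k:ℝ)-1) (by linarith : (0:ℝ) ≤ b-a)) hb.le,
      sq_nonneg ((k:ℝ)*(b-a)), mul_nonneg (sq_nonneg (k:ℝ)) hab.le]
  · subst hk; push_cast; nlinarith [sq_nonneg a, sq_nonneg b]
  · have hk1 : (1:ℝ) ≤ (k:ℝ) := by exact_mod_cast hk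
    nlinarith [sq_nonneg ((k:ℝ)-1), mul_nonneg (mul_nonneg (by linarith : (0:ℝ) ≤ 2*(k:ℝ)-1) (by linarith : (0:ℝ) ≤ b-a)) (neg_nonneg.2 ha.le),
      sq_nonneg ((k:ℝ)*(b-a)), mul_nonneg (sq_nonneg (k:ℝ)) hab.le]

private lemma key_ineq2 (k : ℤ) (a b : ℝ) (ha : a < 0) (hb : 0 < b) :
    (((k:ℝ)^2+1)) * (a^2+b^2) ≤ (a - b - 2*(k:ℝ)*(b-a))^2 + (a-b)^2 := by
  have hab : 0 < (-a) * b := mul_pos (neg_pos.2 ha) hb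
  have h1 : (a - b - 2*(k:ℝ)*(b-a))^2 + (a-b)^2 = ((2*(k:ℝ)+1)^2 + 1) * (b-a)^2 := by ring
  have h2 : (k:ℝ)^2 + 1 ≤ (2*(k:ℝ)+1)^2 + 1 := by
    have : (0:ℝ) ≤ (3*(k:ℝ)+1)*((k:ℝ)+1) := by
      rcases le_or_gt 0 k with hk | hk
      · have : (0:ℝ) ≤ (k:ℝ) := by exact_mod_cast hk
        nlinarith
      · have : (k:ℝ) ≤ -1 := by exact_mod_cast (show k ≤ -1 by omega)
        nlinarith
    nlinarith
  have h3 : a^2+b^2 ≤ (b-a)^2 := by nlinarith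
  nlinarith [sq_nonneg (b-a), mul_nonneg (sq_nonneg (k:ℝ)) hab.le]

/-- one-dimensional Gaussian bound -/
private lemma gauss_bound (d : ℝ) (hd : 0 < d) (s : Set ℝ) :
    ∫⁻ x in s, ENNReal.ofReal (Real.exp (-(d/2) * x^2)) ≤ ENNReal.ofReal (Real.sqrt (π/(d/2))) := by
  refine (setLIntegral_le_lintegral _ _).trans (le_of_eq ?_)
  rw [← ofReal_integral_eq_lintegral_ofReal (integrable_exp_neg_mul_sq (by positivity))
    (Filter.Eventually.of_forall fun x => (Real.exp_pos _).le), integral_gaussian]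

private lemma summable_aux : Summable (fun k : ℤ => 2 * (π / (((k:ℝ)^2+1)/2))) := by
  have hnat : Summable (fun n : ℕ => (((n:ℝ)^2+1))⁻¹) := by
    have h1 : Summable (fun n : ℕ => 1 / ((n:ℝ)) ^ 2) := summable_one_div_nat_pow.mpr one_lt_two
    have h2 : Summable (fun n : ℕ => 1 / ((n:ℝ)+1) ^ 2) := by
      have := (summable_nat_add_iff 1).mpr h1
      refine this.congr fun n => ?_
      push_cast; ring
    refine Summable.of_nonneg_of_le (fun n => by positivity) (fun n => ?_) (h2.mul_left 2)
    rw [mul_one_div]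
    rw [inv_eq_one_div, div_le_div_iff₀ (by positivity) (by positivity)]
    nlinarith [sq_nonneg ((n:ℝ)-1)]
  have hint : Summable (fun k : ℤ => (((k:ℝ)^2+1))⁻¹) := by
    refine Summable.of_nat_of_neg (hnat.congr fun n => by push_cast; ring) (hnat.congr fun n => by push_cast; ring)
  refine (hint.mul_left (4*π)).congr fun k => ?_
  field_simp
  ring

theorem abs_summable_integral_lt_top :
    (∫⁻ b in Set.Ioi (0 : ℝ), ∫⁻ a in Set.Iio (0 : ℝ),
      ∑' k : ℤ, ENNReal.ofReal
        |Real.exp (-(((a + b - 2 * (k : ℝ) * (b - a)) ^ 2 + (a - b) ^ 2) / 2)) -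
         Real.exp (-(((a - b - 2 * (k : ℝ) * (b - a)) ^ 2 + (a - b) ^ 2) / 2))|) < ⊤ := by
  set E : ℤ → ℝ → ℝ≥0∞ := fun k x => ENNReal.ofReal (Real.exp (-((((k:ℝ)^2+1))/2) * x^2)) with hE
  have hEm : ∀ k, Measurable (E k) := by
    intro k
    exact (Real.continuous_exp.comp (by continuity)).measurable.ennreal_ofReal
  -- pointwise bound
  have key : ∀ (k : ℤ) (a b : ℝ), a < 0 → 0 < b →
      ENNReal.ofReal
        |Real.exp (-(((a + b - 2 * (k : ℝ) * (b - a)) ^ 2 + (a - b) ^ 2) / 2)) -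
         Real.exp (-(((a - b - 2 * (k : ℝ) * (b - a)) ^ 2 + (a - b) ^ 2) / 2))|
      ≤ 2 * (E k a * E k b) := by
    intro k a b ha hb
    set d : ℝ := (k:ℝ)^2+1 with hd
    have hprod : Real.exp (-(d/2) * a^2) * Real.exp (-(d/2) * b^2)
        = Real.exp (-(d/2) * (a^2+b^2)) := by
      rw [← Real.exp_add]; ring_nf
    have h1 : Real.exp (-(((a + b - 2 * (k : ℝ) * (b - a)) ^ 2 + (a - b) ^ 2) / 2))
        ≤ Real.exp (-(d/2) * (a^2+b^2)) := by
      apply Real.exp_le_exp.mpr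
      have := key_ineq1 k a b ha hb
      rw [hd]; nlinarith
    have h2 : Real.exp (-(((a - b - 2 * (k : ℝ) * (b - a)) ^ 2 + (a - b) ^ 2) / 2))
        ≤ Real.exp (-(d/2) * (a^2+b^2)) := by
      apply Real.exp_le_exp.mpr
      have := key_ineq2 k a b ha hb
      rw [hd]; nlinarith
    have habs : |Real.exp (-(((a + b - 2 * (k : ℝ) * (b - a)) ^ 2 + (a - b) ^ 2) / 2)) -
         Real.exp (-(((a - b - 2 * (k : ℝ) * (b - a)) ^ 2 + (a - b) ^ 2) / 2))|
        ≤ 2 * (Real.exp (-(d/2) * a^2) * Real.exp (-(d/2) * b^2)) := by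
      rw [hprod]
      refine abs_le.mpr ⟨?_, ?_⟩ <;>
        nlinarith [Real.exp_pos (-(((a + b - 2 * (k : ℝ) * (b - a)) ^ 2 + (a - b) ^ 2) / 2)),
          Real.exp_pos (-(((a - b - 2 * (k : ℝ) * (b - a)) ^ 2 + (a - b) ^ 2) / 2)),
          Real.exp_pos (-(d/2) * (a^2+b^2))]
    calc ENNReal.ofReal _ ≤ ENNReal.ofReal (2 * (Real.exp (-(d/2) * a^2) * Real.exp (-(d/2) * b^2))) :=
          ENNReal.ofReal_le_ofReal habs
      _ = 2 * (E k a * E k b) := by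
          rw [ENNReal.ofReal_mul (by norm_num), ENNReal.ofReal_mul (Real.exp_pos _).le,
            ENNReal.ofReal_ofNat]
  -- bound for each k of the double integral
  have hk_bound : ∀ k : ℤ,
      (∫⁻ b in Set.Ioi (0:ℝ), ∫⁻ a in Set.Iio (0:ℝ), 2 * (E k a * E k b))
        ≤ ENNReal.ofReal (2 * (π / (((k:ℝ)^2+1)/2))) := by
    intro k
    set d : ℝ := (k:ℝ)^2+1 with hd
    have hdpos : 0 < d := by positivity
    have hG := gauss_bound d hdpos
    have inner_eq : ∀ b : ℝ, (∫⁻ a in Set.Iio (0:ℝ), 2 * (E k a * E k b))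
        = (2 * E k b) * ∫⁻ a in Set.Iio (0:ℝ), E k a := by
      intro b
      rw [← lintegral_const_mul _ (hEm k)]
      congr 1; ext a; ring
    calc (∫⁻ b in Set.Ioi (0:ℝ), ∫⁻ a in Set.Iio (0:ℝ), 2 * (E k a * E k b))
        = (∫⁻ b in Set.Ioi (0:ℝ), (2 * E k b) * ∫⁻ a in Set.Iio (0:ℝ), E k a) := by
          exact lintegral_congr fun b => inner_eq b
      _ = (∫⁻ b in Set.Ioi (0:ℝ), E k b * (2 * ∫⁻ a in Set.Iio (0:ℝ), E k a)) :=
          lintegral_congr fun b => by ring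
      _ = (∫⁻ b in Set.Ioi (0:ℝ), E k b) * (2 * ∫⁻ a in Set.Iio (0:ℝ), E k a) :=
          lintegral_mul_const _ (hEm k)
      _ ≤ ENNReal.ofReal (Real.sqrt (π/(d/2))) * (2 * ENNReal.ofReal (Real.sqrt (π/(d/2)))) := by
          exact mul_le_mul' (hG _) (mul_le_mul' le_rfl (hG _))
      _ = 2 * (ENNReal.ofReal (Real.sqrt (π/(d/2))) * ENNReal.ofReal (Real.sqrt (π/(d/2)))) := by
          ring
      _ = ENNReal.ofReal (2 * (π/(d/2))) := by
          rw [← ENNReal.ofReal_mul (Real.sqrt_nonneg _),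
            Real.mul_self_sqrt (by positivity), ENNReal.ofReal_mul (by norm_num),
            ENNReal.ofReal_ofNat]
  -- main chain
  have step1 : (∫⁻ b in Set.Ioi (0 : ℝ), ∫⁻ a in Set.Iio (0 : ℝ),
      ∑' k : ℤ, ENNReal.ofReal
        |Real.exp (-(((a + b - 2 * (k : ℝ) * (b - a)) ^ 2 + (a - b) ^ 2) / 2)) -
         Real.exp (-(((a - b - 2 * (k : ℝ) * (b - a)) ^ 2 + (a - b) ^ 2) / 2))|)
      ≤ ∫⁻ b in Set.Ioi (0:ℝ), ∫⁻ a in Set.Iio (0:ℝ), ∑' k : ℤ, 2 * (E k a * E k b) := by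
    refine setLIntegral_mono' measurableSet_Ioi fun b hb => ?_
    refine setLIntegral_mono' measurableSet_Iio fun a ha => ?_
    exact ENNReal.tsum_le_tsum fun k => key k a b ha hb
  have step2 : (∫⁻ b in Set.Ioi (0:ℝ), ∫⁻ a in Set.Iio (0:ℝ), ∑' k : ℤ, 2 * (E k a * E k b))
      = ∑' k : ℤ, ∫⁻ b in Set.Ioi (0:ℝ), ∫⁻ a in Set.Iio (0:ℝ), 2 * (E k a * E k b) := by
    rw [← lintegral_tsum]
    · refine lintegral_congr fun b => ?_
      rw [← lintegral_tsum]
      intro k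
      exact (((hEm k).mul_const _).const_mul 2).aemeasurable
    · intro k
      apply Measurable.aemeasurable
      apply Measurable.lintegral_prod_right (f := fun (b : ℝ) (a : ℝ) => 2 * (E k a * E k b))
      exact (((hEm k).comp measurable_snd).mul ((hEm k).comp measurable_fst)).const_mul 2
  have step3 : (∑' k : ℤ, ∫⁻ b in Set.Ioi (0:ℝ), ∫⁻ a in Set.Iio (0:ℝ), 2 * (E k a * E k b))
      ≤ ∑' k : ℤ, ENNReal.ofReal (2 * (π / (((k:ℝ)^2+1)/2))) :=
    ENNReal.tsum_le_tsum hk_bound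
  have step4 : (∑' k : ℤ, ENNReal.ofReal (2 * (π / (((k:ℝ)^2+1)/2)))) < ⊤ := by
    rw [← ENNReal.ofReal_tsum_of_nonneg (fun k => by positivity) summable_aux]
    exact ENNReal.ofReal_lt_top
  calc _ ≤ _ := step1
    _ = _ := step2
    _ ≤ _ := step3
    _ < ⊤ := step4
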